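/- arXiv:1604.06791 — 4 statements merged into one kernel-verified Lean document; each statement's English description precedes it below -/
import Mathlib

section
/- Hölder bump estimate: let 0 < p < ∞, 0 < r < 1, and set s = (p+1)/(rp), s' = (p+1)/(p+1-rp), t = (p+1)/(rs') = (p+1-rp)/r. Then t > 1, and for any cube (or measurable set) B of finite positive measure, any weight σ, and any positive measurable f, (⨍_B σ^r)^{(p+1)/r} ≤ (⨍_B (f^p σ)^{1/t})^t · (⨍_B f^{-1}σ)^p. -/
open MeasureTheory Set ENNReal

/-- Hölder bump estimate: for `0 < p`, `0 < r < 1` and `t = (p+1-rp)/r`, one has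
`t > 1` and `(⨍_B σ^r)^{(p+1)/r} ≤ (⨍_B (f^p σ)^{1/t})^t · (⨍_B f^{-1}σ)^p`. -/
theorem holder_bump_estimate (n : ℕ) (p r : ℝ) (hp : 0 < p)
    (hr0 : 0 < r) (hr1 : r < 1)
    (B : Set (Fin n → ℝ)) (hB : MeasurableSet B)
    (h0 : 0 < volume B) (hfin : volume B < ⊤)
    (σ f : (Fin n → ℝ) → ℝ) (hσ0 : 0 ≤ σ) (hσm : Measurable σ)
    (hfm : Measurable f) (hfpos : ∀ x, 0 < f x) :
    1 < (p + 1 - r * p) / r ∧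
      ((volume B)⁻¹ * ∫⁻ y in B, ENNReal.ofReal (σ y) ^ r) ^ ((p + 1) / r)
        ≤ ((volume B)⁻¹ * ∫⁻ y in B,
              (ENNReal.ofReal (f y) ^ p * ENNReal.ofReal (σ y)) ^ (r / (p + 1 - r * p)))
            ^ ((p + 1 - r * p) / r)
          * ((volume B)⁻¹ * ∫⁻ y in B,
              (ENNReal.ofReal (f y))⁻¹ * ENNReal.ofReal (σ y)) ^ p := by
  have hrp : 0 < r * p := mul_pos hr0 hp
  have hA0 : 0 < p + 1 - r * p := by nlinarith
  have hp1 : 0 < p + 1 := by linarith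
  refine ⟨by rw [lt_div_iff₀ hr0]; nlinarith, ?_⟩
  have hFm : Measurable fun x => ENNReal.ofReal (f x) := hfm.ennreal_ofReal
  have ham : Measurable fun x => ENNReal.ofReal (σ x) := hσm.ennreal_ofReal
  set g : (Fin n → ℝ) → ℝ≥0∞ :=
    fun x => (ENNReal.ofReal (f x) ^ p * ENNReal.ofReal (σ x)) ^ (r / (p + 1)) with hg
  set h : (Fin n → ℝ) → ℝ≥0∞ :=
    fun x => ((ENNReal.ofReal (f x))⁻¹ * ENNReal.ofReal (σ x)) ^ (r * p / (p + 1)) with hh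
  have hgm : Measurable g := ((hFm.pow_const p).mul ham).pow_const _
  have hhm : Measurable h := (hFm.inv.mul ham).pow_const _
  -- conjugate exponents
  have hconj : ((p + 1) / (p + 1 - r * p)).HolderConjugate ((p + 1) / (r * p)) := by
    rw [Real.holderConjugate_iff]
    constructor
    · rw [lt_div_iff₀ hA0]; nlinarith
    · rw [inv_div, inv_div]
      field_simp
      ring
  -- pointwise identity
  have hpt : ∀ x, ENNReal.ofReal (σ x) ^ r = g x * h x := by
    intro x
    have hFx0 : ENNReal.ofReal (f x) ≠ 0 := by
      simp [ENNReal.ofReal_eq_zero, not_le, hfpos x]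
    have hFxt : ENNReal.ofReal (f x) ≠ ⊤ := ENNReal.ofReal_ne_top
    rw [hg, hh]
    simp only []
    rw [ENNReal.mul_rpow_of_nonneg _ _ (by positivity),
        ENNReal.mul_rpow_of_nonneg _ _ (by positivity)]
    have e1 : (ENNReal.ofReal (f x) ^ p) ^ (r / (p + 1))
        = ENNReal.ofReal (f x) ^ (r * p / (p + 1)) := by
      rw [← ENNReal.rpow_mul]; ring_nf
    have e2 : (ENNReal.ofReal (f x))⁻¹ ^ (r * p / (p + 1))
        = (ENNReal.ofReal (f x) ^ (r * p / (p + 1)))⁻¹ := ENNReal.inv_rpow _ _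
    rw [e1, e2, mul_mul_mul_comm]
    have e3 : ENNReal.ofReal (f x) ^ (r * p / (p + 1))
        * (ENNReal.ofReal (f x) ^ (r * p / (p + 1)))⁻¹ = 1 :=
      ENNReal.mul_inv_cancel
        (ENNReal.rpow_pos (by positivity) hFxt).ne'
        (ENNReal.rpow_ne_top_of_nonneg (by positivity) hFxt)
    rw [e3, one_mul, ← ENNReal.rpow_add_of_nonneg _ _ (by positivity) (by positivity)]
    congr 1
    field_simp
    ring
  -- Hölder
  have eg : ∀ x, g x ^ ((p + 1) / (p + 1 - r * p))
      = (ENNReal.ofReal (f x) ^ p * ENNReal.ofReal (σ x)) ^ (r / (p + 1 - r * p)) := by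
    intro x
    rw [hg]; simp only []
    rw [← ENNReal.rpow_mul]
    congr 1
    field_simp
  have eh : ∀ x, h x ^ ((p + 1) / (r * p))
      = (ENNReal.ofReal (f x))⁻¹ * ENNReal.ofReal (σ x) := by
    intro x
    rw [hh]; simp only []
    rw [← ENNReal.rpow_mul]
    rw [show r * p / (p + 1) * ((p + 1) / (r * p)) = 1 by field_simp]
    exact ENNReal.rpow_one _
  have holder := ENNReal.lintegral_mul_le_Lp_mul_Lq (volume.restrict B) hconj
    hgm.aemeasurable hhm.aemeasurable
  have step1 : (∫⁻ y in B, ENNReal.ofReal (σ y) ^ r)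
      ≤ (∫⁻ y in B, (ENNReal.ofReal (f y) ^ p * ENNReal.ofReal (σ y)) ^ (r / (p + 1 - r * p)))
          ^ ((p + 1 - r * p) / (p + 1))
        * (∫⁻ y in B, (ENNReal.ofReal (f y))⁻¹ * ENNReal.ofReal (σ y)) ^ (r * p / (p + 1)) := by
    calc (∫⁻ y in B, ENNReal.ofReal (σ y) ^ r) = ∫⁻ y in B, (g * h) y :=
          lintegral_congr fun x => hpt x
      _ ≤ (∫⁻ y in B, g y ^ ((p + 1) / (p + 1 - r * p))) ^ (1 / ((p + 1) / (p + 1 - r * p)))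
          * (∫⁻ y in B, h y ^ ((p + 1) / (r * p))) ^ (1 / ((p + 1) / (r * p))) := holder
      _ = _ := by
          rw [lintegral_congr eg, lintegral_congr eh, one_div_div, one_div_div]
  -- combine with the averages
  set J := ∫⁻ y in B, (ENNReal.ofReal (f y) ^ p * ENNReal.ofReal (σ y)) ^ (r / (p + 1 - r * p))
    with hJ
  set K := ∫⁻ y in B, (ENNReal.ofReal (f y))⁻¹ * ENNReal.ofReal (σ y) with hK
  set ν := (volume B)⁻¹ with hν
  have step2 : ν * (∫⁻ y in B, ENNReal.ofReal (σ y) ^ r)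
      ≤ (ν * J) ^ ((p + 1 - r * p) / (p + 1)) * (ν * K) ^ (r * p / (p + 1)) := by
    have hsplit : ν = ν ^ ((p + 1 - r * p) / (p + 1)) * ν ^ (r * p / (p + 1)) := by
      rw [← ENNReal.rpow_add_of_nonneg _ _ (by positivity) (by positivity)]
      rw [show (p + 1 - r * p) / (p + 1) + r * p / (p + 1) = 1 by field_simp; ring]
      exact (ENNReal.rpow_one _).symm
    calc ν * (∫⁻ y in B, ENNReal.ofReal (σ y) ^ r)
        ≤ ν * (J ^ ((p + 1 - r * p) / (p + 1)) * K ^ (r * p / (p + 1))) :=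
          mul_le_mul_right step1 ν
      _ = (ν * J) ^ ((p + 1 - r * p) / (p + 1)) * (ν * K) ^ (r * p / (p + 1)) := by
          rw [ENNReal.mul_rpow_of_nonneg _ _ (by positivity),
              ENNReal.mul_rpow_of_nonneg _ _ (by positivity)]
          nth_rewrite 1 [hsplit]
          ring
  calc (ν * ∫⁻ y in B, ENNReal.ofReal (σ y) ^ r) ^ ((p + 1) / r)
      ≤ ((ν * J) ^ ((p + 1 - r * p) / (p + 1)) * (ν * K) ^ (r * p / (p + 1))) ^ ((p + 1) / r) :=
        ENNReal.rpow_le_rpow step2 (by positivity)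
    _ = (ν * J) ^ ((p + 1 - r * p) / r) * (ν * K) ^ p := by
        rw [ENNReal.mul_rpow_of_nonneg _ _ (by positivity),
            ← ENNReal.rpow_mul, ← ENNReal.rpow_mul]
        congr 1
        · congr 1; field_simp
        · congr 1; field_simp
end

section
/- Two weight A_{-p} condition implies the dyadic testing condition: let 0 < p < ∞ and (u, σ) be a pair of weights such that ⨍_Q u ≤ C(⨍_Q σ)^{p+1} for all dyadic cubes Q. Then there is a constant C' such that ∫_Q (M^𝖣_{-1}(1_Q σ^{-1}))^p u ≤ C' ∫_Q σ for all dyadic cubes Q. -/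
open MeasureTheory Set ENNReal Filter

/-- A dyadic grid in `ℝⁿ`: every member is a half-open cube of sidelength `2^k`,
any two members are nested or disjoint, and for each `k` the cubes of
sidelength `2^k` cover `ℝⁿ`. -/
def IsDyadicGrid {n : ℕ} (𝒟 : Set (Set (Fin n → ℝ))) : Prop :=
  (∀ Q ∈ 𝒟, ∃ (k : ℤ) (a : Fin n → ℝ),
      Q = Set.univ.pi fun i => Set.Ico (a i) (a i + (2 : ℝ) ^ k)) ∧
  (∀ Q ∈ 𝒟, ∀ P ∈ 𝒟, Q ∩ P = ∅ ∨ Q ∩ P = Q ∨ Q ∩ P = P) ∧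
  (∀ (k : ℤ) (x : Fin n → ℝ), ∃ Q ∈ 𝒟, x ∈ Q ∧
      ∃ a : Fin n → ℝ, Q = Set.univ.pi fun i => Set.Ico (a i) (a i + (2 : ℝ) ^ k))

/-- The harmonic maximal operator over a family `𝓑`, applied to
`g : ℝⁿ → ℝ≥0∞`: `M₋₁^𝓑 g(x) = sup_{B ∈ 𝓑, x ∈ B} (⨍_B g⁻¹)⁻¹`, with the
conventions `1/0 = ∞`, `1/∞ = 0` built into `ℝ≥0∞`. -/
noncomputable def harmMax {n : ℕ} (𝓑 : Set (Set (Fin n → ℝ)))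
    (g : (Fin n → ℝ) → ℝ≥0∞) (x : Fin n → ℝ) : ℝ≥0∞ :=
  ⨆ (B ∈ 𝓑) (_ : x ∈ B), ((volume B)⁻¹ * ∫⁻ y in B, (g y)⁻¹)⁻¹

section Helpers

variable {n : ℕ}

def Cube (a : Fin n → ℝ) (k : ℤ) : Set (Fin n → ℝ) :=
  Set.univ.pi fun i => Set.Ico (a i) (a i + (2 : ℝ) ^ k)

lemma two_zpow_pos (k : ℤ) : (0:ℝ) < 2 ^ k := zpow_pos (by norm_num) k

lemma corner_mem_cube (a : Fin n → ℝ) (k : ℤ) : a ∈ Cube a k := by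
  intro i _
  exact ⟨le_refl _, by linarith [two_zpow_pos k]⟩

lemma cube_measurable (a : Fin n → ℝ) (k : ℤ) : MeasurableSet (Cube a k) :=
  MeasurableSet.univ_pi fun i => measurableSet_Ico

lemma cube_volume (a : Fin n → ℝ) (k : ℤ) :
    volume (Cube a k) = ENNReal.ofReal ((2:ℝ) ^ k) ^ n := by
  rw [Cube, volume_pi_pi]; simp [Real.volume_Ico]

lemma cube_volume_pos (a : Fin n → ℝ) (k : ℤ) : 0 < volume (Cube a k) := by
  rw [cube_volume]
  exact pos_iff_ne_zero.2 (pow_ne_zero _ (by positivity))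

lemma cube_volume_lt_top (a : Fin n → ℝ) (k : ℤ) : volume (Cube a k) < ⊤ :=
  (cube_volume a k) ▸ (lt_top_iff_ne_top.2 (pow_ne_top ofReal_ne_top))

lemma cube_subset_corner {a b : Fin n → ℝ} {k k' : ℤ}
    (h : Cube a k ⊆ Cube b k') (i : Fin n) :
    b i ≤ a i ∧ a i + (2:ℝ)^k ≤ b i + (2:ℝ)^k' := by
  have h1 := h (corner_mem_cube a k) i (mem_univ i)
  refine ⟨h1.1, le_of_forall_pos_lt_add' fun ε hε => ?_⟩
  set δ := min ε ((2:ℝ)^k) with hδdef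
  have hδpos : 0 < δ := lt_min hε (two_zpow_pos k)
  have hδle : δ ≤ (2:ℝ)^k := min_le_right _ _
  set y := Function.update a i (a i + 2^k - δ) with hy
  have hyC : y ∈ Cube a k := by
    intro j _
    by_cases hj : j = i
    · subst hj
      simp only [hy, Function.update_self]
      constructor <;> [linarith; linarith]
    · simp only [hy, Function.update_of_ne hj]
      exact corner_mem_cube a k j (mem_univ j)
  have := (h hyC) i (mem_univ i)
  simp only [hy, Function.update_self] at this
  have h2 := this.2
  have : δ ≤ ε := min_le_left _ _
  linarith

lemma cube_subset_same_scale {a b : Fin n → ℝ} {k : ℤ}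
    (h : Cube a k ⊆ Cube b k) : Cube a k = Cube b k := by
  have : a = b := by
    funext i
    have h1 := cube_subset_corner h i
    exact le_antisymm (by linarith [h1.2]) h1.1
  rw [this]

lemma cube_subset_scale_le {a b : Fin n → ℝ} {k k' : ℤ} (hn : 0 < n)
    (h : Cube a k ⊆ Cube b k') : k ≤ k' := by
  obtain ⟨i⟩ : Nonempty (Fin n) := ⟨⟨0, hn⟩⟩
  have h1 := cube_subset_corner h i
  have : (2:ℝ)^k ≤ 2^k' := by linarith [h1.1, h1.2]
  exact_mod_cast (zpow_le_zpow_iff_right₀ (by norm_num : (1:ℝ) < 2)).1 this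

lemma cube_eq_univ_of_n_zero (hn : n = 0) (a : Fin n → ℝ) (k : ℤ) : Cube a k = univ := by
  subst hn
  ext x
  simp [Cube]

lemma cube_rat_point (a : Fin n → ℝ) (k : ℤ) :
    ∃ q : Fin n → ℚ, (fun i => (q i : ℝ)) ∈ Cube a k := by
  have : ∀ i, ∃ q : ℚ, a i < q ∧ (q:ℝ) < a i + 2^k := fun i =>
    exists_rat_btwn (by linarith [two_zpow_pos k])
  choose q hq using this
  exact ⟨q, fun i _ => ⟨(hq i).1.le, (hq i).2⟩⟩

lemma grid_rep {𝒟 : Set (Set (Fin n → ℝ))} (hD : IsDyadicGrid 𝒟) {B : Set (Fin n → ℝ)}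
    (hB : B ∈ 𝒟) : ∃ (k : ℤ) (a : Fin n → ℝ), B = Cube a k := hD.1 B hB

lemma grid_nested {𝒟 : Set (Set (Fin n → ℝ))} (hD : IsDyadicGrid 𝒟)
    {B P : Set (Fin n → ℝ)} (hB : B ∈ 𝒟) (hP : P ∈ 𝒟) {x : Fin n → ℝ}
    (hxB : x ∈ B) (hxP : x ∈ P) : B ⊆ P ∨ P ⊆ B := by
  rcases hD.2.1 B hB P hP with h | h | h
  · exact absurd (h ▸ (⟨hxB, hxP⟩ : x ∈ B ∩ P)) (Set.notMem_empty x)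
  · left; rw [← h]; exact Set.inter_subset_right
  · right; rw [← h]; exact Set.inter_subset_left

lemma exists_max_cube {𝒟 : Set (Set (Fin n → ℝ))} (hD : IsDyadicGrid 𝒟)
    {Q : Set (Fin n → ℝ)} {aQ : Fin n → ℝ} {kQ : ℤ} (hQrep : Q = Cube aQ kQ)
    {x : Fin n → ℝ} (S : Set (Set (Fin n → ℝ)))
    (hS : ∀ B ∈ S, B ∈ 𝒟 ∧ x ∈ B ∧ B ⊆ Q) (hne : S.Nonempty) :
    ∃ M ∈ S, ∀ B ∈ S, B ⊆ M := by
  rcases Nat.eq_zero_or_pos n with hn | hn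
  · obtain ⟨M, hM⟩ := hne
    refine ⟨M, hM, fun B hB => ?_⟩
    obtain ⟨k, a, hrep⟩ := grid_rep hD (hS M hM).1
    rw [hrep, cube_eq_univ_of_n_zero hn]
    exact subset_univ B
  · set K : ℤ → Prop := fun k => ∃ B ∈ S, ∃ a, B = Cube a k with hK
    have hKne : ∃ k, K k := by
      obtain ⟨B, hB⟩ := hne
      obtain ⟨k, a, hrep⟩ := grid_rep hD (hS B hB).1
      exact ⟨k, B, hB, a, hrep⟩
    have hKbdd : ∃ b, ∀ k, K k → k ≤ b := by
      refine ⟨kQ, fun k hk => ?_⟩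
      obtain ⟨B, hB, a, hrep⟩ := hk
      exact cube_subset_scale_le hn (hrep ▸ hQrep ▸ (hS B hB).2.2)
    obtain ⟨kmax, ⟨M, hMS, aM, hMrep⟩, hmax⟩ := Int.exists_greatest_of_bdd hKbdd hKne
    refine ⟨M, hMS, fun B hB => ?_⟩
    obtain ⟨k, a, hrep⟩ := grid_rep hD (hS B hB).1
    rcases grid_nested hD (hS B hB).1 (hS M hMS).1 (hS B hB).2.1 (hS M hMS).2.1 with h | h
    · exact h
    · have hk : k ≤ kmax := hmax k ⟨B, hB, a, hrep⟩
      have hk' : kmax ≤ k := cube_subset_scale_le hn (hrep ▸ hMrep ▸ h)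
      have : k = kmax := le_antisymm hk hk'
      subst this
      rw [hrep, hMrep] at h ⊢
      rw [cube_subset_same_scale h]

lemma cube_subset_Icc (a : Fin n → ℝ) (k : ℤ) :
    Cube a k ⊆ Set.Icc a (fun i => a i + 2^k) := by
  intro x hx
  rw [Set.mem_Icc]
  constructor <;> intro i
  · exact (hx i (mem_univ i)).1
  · exact (hx i (mem_univ i)).2.le

lemma weight_lintegral_lt_top {w : (Fin n → ℝ) → ℝ} (hw : LocallyIntegrable w volume)
    (a : Fin n → ℝ) (k : ℤ) : ∫⁻ y in Cube a k, ENNReal.ofReal (w y) < ⊤ := by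
  have h1 : IntegrableOn w (Set.Icc a (fun i => a i + 2^k)) volume :=
    hw.integrableOn_isCompact isCompact_Icc
  have h2 : IntegrableOn w (Cube a k) volume := h1.mono_set (cube_subset_Icc a k)
  refine lt_of_le_of_lt (lintegral_mono fun y => ?_) h2.2.lt_top
  rw [Real.enorm_eq_ofReal_abs]
  exact ENNReal.ofReal_le_ofReal (le_abs_self _)

lemma grid_weight_ne_top {𝒟 : Set (Set (Fin n → ℝ))} (hD : IsDyadicGrid 𝒟)
    {B : Set (Fin n → ℝ)} (hB : B ∈ 𝒟) {w : (Fin n → ℝ) → ℝ}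
    (hw : LocallyIntegrable w volume) : (∫⁻ y in B, ENNReal.ofReal (w y)) ≠ ⊤ := by
  obtain ⟨k, a, hrep⟩ := grid_rep hD hB
  rw [hrep]
  exact (weight_lintegral_lt_top hw a k).ne

lemma grid_measurable {𝒟 : Set (Set (Fin n → ℝ))} (hD : IsDyadicGrid 𝒟)
    {B : Set (Fin n → ℝ)} (hB : B ∈ 𝒟) : MeasurableSet B := by
  obtain ⟨k, a, h⟩ := grid_rep hD hB; rw [h]; exact cube_measurable a k

lemma grid_vol_pos {𝒟 : Set (Set (Fin n → ℝ))} (hD : IsDyadicGrid 𝒟)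
    {B : Set (Fin n → ℝ)} (hB : B ∈ 𝒟) : volume B ≠ 0 := by
  obtain ⟨k, a, h⟩ := grid_rep hD hB; rw [h]; exact (cube_volume_pos a k).ne'

lemma grid_vol_ne_top {𝒟 : Set (Set (Fin n → ℝ))} (hD : IsDyadicGrid 𝒟)
    {B : Set (Fin n → ℝ)} (hB : B ∈ 𝒟) : volume B ≠ ⊤ := by
  obtain ⟨k, a, h⟩ := grid_rep hD hB; rw [h]; exact (cube_volume_lt_top a k).ne

-- inner integral over a subcube equals ∫ w
lemma inner_integral_eq {Q B : Set (Fin n → ℝ)} (hBmeas : MeasurableSet B)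
    (hBQ : B ⊆ Q) (w : (Fin n → ℝ) → ℝ≥0∞) :
    (∫⁻ y in B, ((Q.indicator fun z => (w z)⁻¹) y)⁻¹) = ∫⁻ y in B, w y := by
  refine setLIntegral_congr_fun hBmeas (fun y hy => ?_)
  rw [Set.indicator_of_mem (hBQ hy), inv_inv]

lemma harm_le_sup {𝒟 : Set (Set (Fin n → ℝ))} (hD : IsDyadicGrid 𝒟)
    {Q : Set (Fin n → ℝ)} (hQ : Q ∈ 𝒟) (w : (Fin n → ℝ) → ℝ≥0∞)
    {x : Fin n → ℝ} (hx : x ∈ Q) :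
    harmMax 𝒟 (Q.indicator fun y => (w y)⁻¹) x ≤
      ⨆ (B ∈ 𝒟) (_ : x ∈ B) (_ : B ⊆ Q), volume B * (∫⁻ y in B, w y)⁻¹ := by
  refine iSup₂_le fun B hB => iSup_le fun hxB => ?_
  have hBmeas := grid_measurable hD hB
  have hQmeas := grid_measurable hD hQ
  have hterm : ∀ (B' : Set (Fin n → ℝ)), B' ∈ 𝒟 → x ∈ B' → B' ⊆ Q →
      volume B' * (∫⁻ y in B', w y)⁻¹ ≤
        ⨆ (B ∈ 𝒟) (_ : x ∈ B) (_ : B ⊆ Q), volume B * (∫⁻ y in B, w y)⁻¹ := by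
    intro B' h1 h2 h3
    exact le_iSup_of_le B' (le_iSup_of_le h1 (le_iSup_of_le h2 (le_iSup_of_le h3 le_rfl)))
  have hsubcube : ∀ (B' : Set (Fin n → ℝ)), B' ∈ 𝒟 → B' ⊆ Q →
      ((volume B')⁻¹ * ∫⁻ y in B', ((Q.indicator fun z => (w z)⁻¹) y)⁻¹)⁻¹ =
        volume B' * (∫⁻ y in B', w y)⁻¹ := by
    intro B' h1 h3
    rw [inner_integral_eq (grid_measurable hD h1) h3,
      ENNReal.mul_inv (Or.inl (ENNReal.inv_ne_zero.2 (grid_vol_ne_top hD h1)))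
        (Or.inl (ENNReal.inv_ne_top.2 (grid_vol_pos hD h1))), inv_inv]
  rcases hD.2.1 B hB Q hQ with h | h | h
  · exact absurd (h ▸ (⟨hxB, hx⟩ : x ∈ B ∩ Q)) (Set.notMem_empty x)
  · -- B ⊆ Q
    have hBQ : B ⊆ Q := by rw [← h]; exact Set.inter_subset_right
    rw [hsubcube B hB hBQ]
    exact hterm B hB hxB hBQ
  · -- Q ⊆ B
    have hQB : Q ⊆ B := by rw [← h]; exact Set.inter_subset_left
    by_cases hnull : volume (B \ Q) = 0
    · have hae : B =ᵐ[volume] Q := by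
        rw [ae_eq_set]
        exact ⟨hnull, by rw [Set.diff_eq_empty.2 hQB]; simp⟩
      have h1 : (∫⁻ y in B, ((Q.indicator fun z => (w z)⁻¹) y)⁻¹) =
          ∫⁻ y in Q, ((Q.indicator fun z => (w z)⁻¹) y)⁻¹ := setLIntegral_congr hae
      have h2 : volume B = volume Q := measure_congr hae
      rw [h1, h2, hsubcube Q hQ subset_rfl]
      exact hterm Q hQ hx subset_rfl
    · have htop : (∫⁻ y in B, ((Q.indicator fun z => (w z)⁻¹) y)⁻¹) = ⊤ := by
        rw [eq_top_iff]
        calc (⊤ : ℝ≥0∞) = ∫⁻ _ in B \ Q, ⊤ := by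
              rw [setLIntegral_const, ENNReal.top_mul hnull]
          _ = ∫⁻ y in B \ Q, ((Q.indicator fun z => (w z)⁻¹) y)⁻¹ := by
              refine (setLIntegral_congr_fun (hBmeas.diff hQmeas)
                (fun y hy => ?_)).symm
              rw [Set.indicator_of_notMem hy.2, ENNReal.inv_zero]
          _ ≤ _ := lintegral_mono_set Set.diff_subset
      rw [htop, ENNReal.mul_top (ENNReal.inv_ne_zero.2 (grid_vol_ne_top hD hB)),
        ENNReal.inv_top]
      exact zero_le

lemma covering_lemma {𝒟 : Set (Set (Fin n → ℝ))} (hD : IsDyadicGrid 𝒟)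
    {Q : Set (Fin n → ℝ)} (hQ : Q ∈ 𝒟) (c : Set (Fin n → ℝ) → ℝ≥0∞) (l : ℝ≥0∞) :
    ∃ 𝓜 : Set (Set (Fin n → ℝ)), 𝓜.Countable ∧
      (∀ B ∈ 𝓜, B ∈ 𝒟 ∧ B ⊆ Q ∧ l < c B) ∧
      (∀ B₁ ∈ 𝓜, ∀ B₂ ∈ 𝓜, B₁ ≠ B₂ → B₁ ∩ B₂ = ∅) ∧
      (∀ x, (∃ B ∈ 𝒟, x ∈ B ∧ B ⊆ Q ∧ l < c B) → x ∈ ⋃₀ 𝓜) := by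
  classical
  set G : Set (Set (Fin n → ℝ)) := {B | B ∈ 𝒟 ∧ B ⊆ Q ∧ l < c B} with hG
  set M : Set (Set (Fin n → ℝ)) := {B ∈ G | ∀ B' ∈ G, B ⊆ B' → B = B'} with hM
  obtain ⟨kQ, aQ, hQrep⟩ := grid_rep hD hQ
  have hMdisj : ∀ B₁ ∈ M, ∀ B₂ ∈ M, B₁ ≠ B₂ → B₁ ∩ B₂ = ∅ := by
    intro B₁ hB₁ B₂ hB₂ hne
    by_contra hcon
    obtain ⟨x, hx⟩ := Set.nonempty_iff_ne_empty.2 hcon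
    rcases grid_nested hD hB₁.1.1 hB₂.1.1 hx.1 hx.2 with h | h
    · exact hne (hB₁.2 B₂ hB₂.1 h)
    · exact hne (hB₂.2 B₁ hB₁.1 h).symm
  refine ⟨M, ?_, fun B hB => hB.1, hMdisj, ?_⟩
  · -- countable via rational points
    have hpt : ∀ B ∈ M, ∃ q : Fin n → ℚ, (fun i => (q i : ℝ)) ∈ B := by
      intro B hB
      obtain ⟨k, a, hrep⟩ := grid_rep hD hB.1.1
      obtain ⟨q, hq⟩ := cube_rat_point a k
      exact ⟨q, hrep ▸ hq⟩
    have : ∀ B : M, ∃ q : Fin n → ℚ, (fun i => (q i : ℝ)) ∈ (B : Set (Fin n → ℝ)) :=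
      fun B => hpt B B.2
    choose f hf using this
    have hinj : Function.Injective f := by
      intro B₁ B₂ hEq
      by_contra hne
      have hne' : (B₁ : Set (Fin n → ℝ)) ≠ B₂ := fun h => hne (Subtype.ext h)
      have := hMdisj B₁ B₁.2 B₂ B₂.2 hne'
      have hx : (fun i => ((f B₁ i : ℝ))) ∈ (B₁ : Set (Fin n → ℝ)) ∩ B₂ := by
        refine ⟨hf B₁, ?_⟩
        rw [hEq]; exact hf B₂
      rw [this] at hx
      exact hx
    have : Countable M := hinj.countable
    exact Set.countable_coe_iff.1 this
  · intro x ⟨B, hB, hxB, hBQ, hc⟩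
    set S : Set (Set (Fin n → ℝ)) := {B' ∈ G | x ∈ B'} with hS
    have hSprop : ∀ B' ∈ S, B' ∈ 𝒟 ∧ x ∈ B' ∧ B' ⊆ Q := fun B' hB' =>
      ⟨hB'.1.1, hB'.2, hB'.1.2.1⟩
    obtain ⟨Mx, hMxS, hMxmax⟩ := exists_max_cube hD hQrep S hSprop ⟨B, ⟨hB, hBQ, hc⟩, hxB⟩
    refine ⟨Mx, ⟨hMxS.1, fun B' hB' hsub => ?_⟩, hMxS.2⟩
    have hB'S : B' ∈ S := ⟨hB', hsub hMxS.2⟩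
    exact subset_antisymm hsub (hMxmax B' hB'S)

-- per-cube estimate, pure arithmetic
lemma cube_estimate {μ ν V l C : ℝ≥0∞} {p : ℝ} (hp : 0 < p)
    (hV0 : V ≠ 0) (hVtop : V ≠ ⊤)
    (hAB : V⁻¹ * μ ≤ C * (V⁻¹ * ν) ^ (p + 1))
    (h1 : V⁻¹ * ν ≤ l⁻¹) :
    μ ≤ C * (l⁻¹) ^ (p + 1) * V := by
  have h2 : (V⁻¹ * ν) ^ (p+1) ≤ (l⁻¹) ^ (p+1) :=
    ENNReal.rpow_le_rpow h1 (by linarith)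
  calc μ = V * (V⁻¹ * μ) := by
        rw [← mul_assoc, ENNReal.mul_inv_cancel hV0 hVtop, one_mul]
    _ ≤ V * (C * (l⁻¹) ^ (p+1)) :=
        mul_le_mul_right (hAB.trans (mul_le_mul_right h2 C)) V
    _ = C * (l⁻¹) ^ (p+1) * V := by ring

lemma inv_le_inv_of_lt {a b : ℝ≥0∞} (h : a < b) : b⁻¹ ≤ a⁻¹ :=
  ENNReal.inv_le_inv.2 h.le

lemma mul_inv_eq {V N : ℝ≥0∞} (hV0 : V ≠ 0) (hVtop : V ≠ ⊤) :
    (V * N⁻¹)⁻¹ = V⁻¹ * N := by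
  rw [ENNReal.mul_inv (Or.inl hV0) (Or.inl hVtop), inv_inv]

-- algebra for the level multiplication
lemma level_algebra {l C V : ℝ≥0∞} {p : ℝ} (hp : 0 < p) (hl0 : l ≠ 0) (hltop : l ≠ ⊤) :
    l ^ p * (C * (l⁻¹) ^ (p + 1) * V) = C * (l⁻¹ * V) := by
  have hi0 : l⁻¹ ≠ 0 := ENNReal.inv_ne_zero.2 hltop
  have hitop : l⁻¹ ≠ ⊤ := ENNReal.inv_ne_top.2 hl0
  have : (l⁻¹ : ℝ≥0∞) ^ (p+1) = (l⁻¹)^p * l⁻¹ := by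
    rw [ENNReal.rpow_add p 1 hi0 hitop, ENNReal.rpow_one]
  rw [this, ENNReal.inv_rpow]
  have hlp0 : l ^ p ≠ 0 := by
    simp [ENNReal.rpow_eq_zero_iff, hl0, hltop, hp.ne', not_lt.2 hp.le]
  have hlptop : l ^ p ≠ ⊤ := by
    simp [ENNReal.rpow_eq_top_iff, hl0, hltop, hp.ne', not_lt.2 hp.le]
  calc l^p * (C * ((l^p)⁻¹ * l⁻¹) * V)
      = (l^p * (l^p)⁻¹) * (C * (l⁻¹ * V)) := by ring
    _ = C * (l⁻¹ * V) := by rw [ENNReal.mul_inv_cancel hlp0 hlptop, one_mul]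

lemma two_rpow_ne_top {p : ℝ} : ((2:ℝ≥0∞)) ^ p ≠ ⊤ := by
  simp [ENNReal.rpow_eq_top_iff]

lemma exists_dyadic_level {l F : ℝ≥0∞} (hl0 : l ≠ 0) (hltop : l ≠ ⊤)
    (hF : 2 * l < F) (hFtop : F ≠ ⊤) :
    ∃ m : ℕ, 1 ≤ m ∧ 2 ^ m * l < F ∧ F ≤ 2 ^ (m + 1) * l := by
  classical
  obtain ⟨N, hN⟩ := ENNReal.exists_nat_gt (ENNReal.div_lt_top hFtop hl0).ne
  have hFN : F < (N : ℝ≥0∞) * l := by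
    rwa [ENNReal.div_lt_iff (Or.inl hl0) (Or.inl hltop)] at hN
  have hN2 : ((N : ℝ≥0∞)) ≤ 2 ^ N := by
    have := @Nat.lt_two_pow_self N
    exact_mod_cast (by exact_mod_cast this.le : (N:ℕ) ≤ 2 ^ N)
  have hFN2 : F < 2 ^ N * l := lt_of_lt_of_le hFN (mul_le_mul_left hN2 l)
  set P : ℕ → Prop := fun m => 2 ^ m * l < F with hP
  have hP1 : P 1 := by simpa [hP, pow_one] using hF
  have hPN : ¬ P N := fun h => absurd hFN2 (not_lt.2 h.le)
  have h1N : 1 ≤ N := by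
    rcases Nat.eq_zero_or_pos N with h | h
    · subst h
      simp only [Nat.cast_zero, zero_mul] at hFN
      exact absurd hFN (by simp)
    · exact h
  set m := Nat.findGreatest P N with hm
  have hPm : P m := Nat.findGreatest_spec h1N hP1
  have h1m : 1 ≤ m := Nat.le_findGreatest h1N hP1
  have hmN : m < N := lt_of_le_of_ne (Nat.findGreatest_le N) (fun h => hPN (h ▸ hPm))
  have hnot : ¬ P (m + 1) := Nat.findGreatest_is_greatest (Nat.lt_succ_self m) hmN
  exact ⟨m, h1m, hPm, not_lt.1 hnot⟩

lemma tsum_twopow_le : (∑' k : ℕ, ((2:ℝ≥0∞) ^ (k+1))⁻¹) ≤ 2 := by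
  have h : ∀ k : ℕ, ((2:ℝ≥0∞) ^ (k+1))⁻¹ ≤ (2⁻¹) ^ k := by
    intro k
    calc ((2:ℝ≥0∞) ^ (k+1))⁻¹ = ((2:ℝ≥0∞)⁻¹) ^ (k+1) := by rw [← ENNReal.inv_pow]
      _ = 2⁻¹ * (2⁻¹) ^ k := pow_succ' _ _
      _ ≤ (2⁻¹) ^ k := mul_le_of_le_one_left' (ENNReal.inv_le_one.2 one_le_two)
  calc (∑' k : ℕ, ((2:ℝ≥0∞) ^ (k+1))⁻¹) ≤ ∑' k : ℕ, ((2:ℝ≥0∞)⁻¹) ^ k :=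
        ENNReal.tsum_le_tsum h
    _ = (1 - 2⁻¹)⁻¹ := ENNReal.tsum_geometric _
    _ = 2 := by rw [ENNReal.one_sub_inv_two, inv_inv]

lemma pointwise_layer {p : ℝ} (hp : 0 < p) {l0 : ℝ≥0∞} (hl0 : l0 ≠ 0)
    (hltop : l0 ≠ ⊤) {n : ℕ} {x : Fin n → ℝ} {F : ℝ≥0∞} {G : ℕ → Set (Fin n → ℝ)}
    (hG : ∀ k : ℕ, 2 ^ (k+1) * l0 < F → x ∈ G k) :
    F ^ p ≤ (2 * l0) ^ p
      + ∑' k : ℕ, (G k).indicator (fun _ => (2 * (2 ^ (k+1) * l0)) ^ p) x := by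
  by_cases hle : F ≤ 2 * l0
  · exact le_trans (ENNReal.rpow_le_rpow hle hp.le) le_self_add
  push_neg at hle
  by_cases hFtop : F = ⊤
  · have hmem : ∀ k : ℕ, x ∈ G k := fun k => by
      refine hG k ?_
      rw [hFtop]
      exact ENNReal.mul_lt_top (ENNReal.pow_ne_top (by norm_num)).lt_top hltop.lt_top
    have : (∑' k : ℕ, (G k).indicator (fun _ => (2 * (2 ^ (k+1) * l0)) ^ p) x) = ⊤ := by
      rw [eq_top_iff]
      calc (⊤:ℝ≥0∞) = ∑' _ : ℕ, (2 * (2 ^ (0+1) * l0)) ^ p := by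
            rw [ENNReal.tsum_const_eq_top_of_ne_zero]
            have hb0 : (0:ℝ≥0∞) < 2 * (2 ^ (0+1) * l0) :=
              pos_iff_ne_zero.2 (mul_ne_zero (by norm_num)
                (mul_ne_zero (by positivity) hl0))
            have hbtop : (2:ℝ≥0∞) * (2 ^ (0+1) * l0) ≠ ⊤ := by
              simp only [zero_add, pow_one]
              exact ENNReal.mul_ne_top (by norm_num)
                (ENNReal.mul_ne_top (by norm_num) hltop)
            exact (ENNReal.rpow_pos hb0 hbtop).ne'
        _ ≤ _ := by
            refine ENNReal.tsum_le_tsum fun k => ?_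
            rw [Set.indicator_of_mem (hmem k)]
            refine ENNReal.rpow_le_rpow ?_ hp.le
            refine mul_le_mul_right (mul_le_mul_left ?_ l0) 2
            exact pow_le_pow_right₀ (by norm_num) (by omega)
    rw [this]
    simp
  · obtain ⟨m, h1m, hlo, hhi⟩ := exists_dyadic_level hl0 hltop hle hFtop
    obtain ⟨k, rfl⟩ : ∃ k, m = k + 1 := ⟨m - 1, by omega⟩
    have hxG : x ∈ G k := hG k hlo
    calc F ^ p ≤ (2 * (2 ^ (k+1) * l0)) ^ p := by
          refine ENNReal.rpow_le_rpow ?_ hp.le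
          rw [← mul_assoc, ← pow_succ']
          exact hhi
      _ = (G k).indicator (fun _ => (2 * (2 ^ (k+1) * l0)) ^ p) x :=
          (Set.indicator_of_mem hxG fun _ => (2 * (2 ^ (k+1) * l0)) ^ p).symm
      _ ≤ ∑' j : ℕ, (G j).indicator (fun _ => (2 * (2 ^ (j+1) * l0)) ^ p) x :=
          ENNReal.le_tsum k
      _ ≤ _ := le_add_self

end Helpers

/-- The two-weight `A_{-p}` condition `⨍_Q u ≤ C (⨍_Q σ)^{p+1}` over a dyadic
grid implies the dyadic testing condition for the harmonic maximal operator. -/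
theorem dyadic_Ap_implies_testing (n : ℕ) (𝒟 : Set (Set (Fin n → ℝ)))
    (hD : IsDyadicGrid 𝒟) (p : ℝ) (hp : 0 < p)
    (u σ : (Fin n → ℝ) → ℝ) (hu0 : 0 ≤ u) (hσ0 : 0 ≤ σ)
    (hu : LocallyIntegrable u volume) (hσ : LocallyIntegrable σ volume)
    (C : ℝ≥0∞) (hC : C ≠ ⊤)
    (hA : ∀ Q ∈ 𝒟, (volume Q)⁻¹ * ∫⁻ y in Q, ENNReal.ofReal (u y)
        ≤ C * ((volume Q)⁻¹ * ∫⁻ y in Q, ENNReal.ofReal (σ y)) ^ (p + 1)) :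
    ∃ C' : ℝ≥0∞, C' ≠ ⊤ ∧ ∀ Q ∈ 𝒟,
      ∫⁻ x in Q,
          (harmMax 𝒟 (Q.indicator fun y => (ENNReal.ofReal (σ y))⁻¹) x) ^ p
            * ENNReal.ofReal (u x)
        ≤ C' * ∫⁻ y in Q, ENNReal.ofReal (σ y) := by
  classical
  refine ⟨3 * (2:ℝ≥0∞) ^ p * C, ?_, fun Q hQ => ?_⟩
  · exact ENNReal.mul_ne_top (ENNReal.mul_ne_top (by norm_num) two_rpow_ne_top) hC
  have hQmeas := grid_measurable hD hQ
  have hV0 := grid_vol_pos hD hQ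
  have hVtop := grid_vol_ne_top hD hQ
  have huae : AEMeasurable (fun y => ENNReal.ofReal (u y)) volume :=
    ENNReal.measurable_ofReal.comp_aemeasurable hu.aestronglyMeasurable.aemeasurable
  by_cases hνQ0 : (∫⁻ y in Q, ENNReal.ofReal (σ y)) = 0
  · -- degenerate case
    have h0 : (volume Q)⁻¹ * ∫⁻ y in Q, ENNReal.ofReal (u y) ≤ 0 := by
      have h := hA Q hQ
      rwa [hνQ0, mul_zero, ENNReal.zero_rpow_of_pos (by linarith), mul_zero] at h
    have hμ0 : (∫⁻ y in Q, ENNReal.ofReal (u y)) = 0 := by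
      rcases mul_eq_zero.1 (le_antisymm h0 zero_le) with h | h
      · exact absurd h (ENNReal.inv_ne_zero.2 hVtop)
      · exact h
    have hae0 : (fun y => ENNReal.ofReal (u y)) =ᵐ[volume.restrict Q] 0 :=
      (lintegral_eq_zero_iff' huae.restrict).1 hμ0
    have hz : ∫⁻ x in Q,
        (harmMax 𝒟 (Q.indicator fun y => (ENNReal.ofReal (σ y))⁻¹) x) ^ p
          * ENNReal.ofReal (u x) = 0 := by
      rw [← lintegral_zero]
      refine lintegral_congr_ae (hae0.mono fun x hx => ?_)
      simp only [hx, Pi.zero_apply, mul_zero]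
    rw [hz]
    exact zero_le
  · -- main case
    set νQ := ∫⁻ y in Q, ENNReal.ofReal (σ y) with hνQdef
    have hνQtop : νQ ≠ ⊤ := grid_weight_ne_top hD hQ hσ
    set l0 : ℝ≥0∞ := volume Q * νQ⁻¹ with hl0def
    have hl00 : l0 ≠ 0 := mul_ne_zero hV0 (ENNReal.inv_ne_zero.2 hνQtop)
    have hl0top : l0 ≠ ⊤ := ENNReal.mul_ne_top hVtop (ENNReal.inv_ne_top.2 hνQ0)
    have hl0inv : l0⁻¹ = (volume Q)⁻¹ * νQ := mul_inv_eq hV0 hVtop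
    have hl0invV : l0⁻¹ * volume Q = νQ := by
      rw [hl0inv, mul_comm ((volume Q)⁻¹) νQ, mul_assoc,
        ENNReal.inv_mul_cancel hV0 hVtop, mul_one]
    have hlk0 : ∀ k : ℕ, ((2:ℝ≥0∞)) ^ (k+1) * l0 ≠ 0 := fun k =>
      mul_ne_zero (pow_ne_zero _ (by norm_num)) hl00
    have hlktop : ∀ k : ℕ, ((2:ℝ≥0∞)) ^ (k+1) * l0 ≠ ⊤ := fun k =>
      ENNReal.mul_ne_top (ENNReal.pow_ne_top (by norm_num)) hl0top
    -- covering families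
    have hcov := fun k : ℕ => covering_lemma hD hQ
      (fun B => volume B * (∫⁻ y in B, ENNReal.ofReal (σ y))⁻¹) (2 ^ (k+1) * l0)
    choose 𝓜 hcount hprop hdisj hcover using hcov
    set G : ℕ → Set (Fin n → ℝ) := fun k => ⋃₀ 𝓜 k with hGdef
    have hGmeas : ∀ k, MeasurableSet (G k) := fun k =>
      MeasurableSet.sUnion (hcount k) fun B hB => grid_measurable hD (hprop k B hB).1
    set c : ℕ → ℝ≥0∞ := fun k => (2 * (2 ^ (k+1) * l0)) ^ p with hcdef
    have hc_ne_top : ∀ k, c k ≠ ⊤ := fun k =>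
      ENNReal.rpow_ne_top_of_nonneg hp.le
        (ENNReal.mul_ne_top (by norm_num) (hlktop k))
    -- pointwise bound
    have hpt : ∀ x ∈ Q,
        (harmMax 𝒟 (Q.indicator fun y => (ENNReal.ofReal (σ y))⁻¹) x) ^ p
          ≤ (2 * l0) ^ p + ∑' k : ℕ, (G k).indicator (fun _ => c k) x := by
      intro x hx
      refine le_trans (ENNReal.rpow_le_rpow
        (harm_le_sup hD hQ (fun y => ENNReal.ofReal (σ y)) hx) hp.le) ?_
      refine pointwise_layer hp hl00 hl0top fun k hk => ?_
      refine hcover k x ?_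
      simp only [lt_iSup_iff] at hk
      obtain ⟨B, hB, hxB, hBQ, hlt⟩ := hk
      exact ⟨B, hB, hxB, hBQ, hlt⟩
    -- estimate for each covering cube
    have hcube : ∀ (k : ℕ) (B : Set (Fin n → ℝ)), B ∈ 𝓜 k →
        (∫⁻ y in B, ENNReal.ofReal (u y))
          ≤ C * ((2 ^ (k+1) * l0)⁻¹) ^ (p+1) * volume B := by
      intro k B hB
      obtain ⟨hBD, hBQ, hlt⟩ := hprop k B hB
      refine cube_estimate hp (grid_vol_pos hD hBD) (grid_vol_ne_top hD hBD)
        (hA B hBD) ?_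
      rw [← mul_inv_eq (grid_vol_pos hD hBD) (grid_vol_ne_top hD hBD)]
      exact ENNReal.inv_le_inv.2 hlt.le
    -- sum of volumes
    have hvolsum : ∀ k : ℕ, (∑' B : (𝓜 k), volume (B : Set (Fin n → ℝ))) ≤ volume Q := by
      intro k
      haveI := (hcount k).to_subtype
      have hdisj' : Pairwise (Function.onFun Disjoint
          (fun B : (𝓜 k) => (B : Set (Fin n → ℝ)))) := by
        intro B₁ B₂ hne
        refine Set.disjoint_iff_inter_eq_empty.2 (hdisj k B₁ B₁.2 B₂ B₂.2 ?_)
        exact fun h => hne (Subtype.ext h)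
      rw [← measure_iUnion hdisj' (fun B => grid_measurable hD (hprop k B B.2).1)]
      refine measure_mono (Set.iUnion_subset fun B => (hprop k B B.2).2.1)
    -- main calculation
    calc ∫⁻ x in Q,
          (harmMax 𝒟 (Q.indicator fun y => (ENNReal.ofReal (σ y))⁻¹) x) ^ p
            * ENNReal.ofReal (u x)
        ≤ ∫⁻ x in Q, ((2 * l0) ^ p + ∑' k : ℕ, (G k).indicator (fun _ => c k) x)
            * ENNReal.ofReal (u x) := by
          refine setLIntegral_mono' hQmeas fun x hx => ?_
          exact mul_le_mul_left (hpt x hx) _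
      _ = (∫⁻ x in Q, (2 * l0) ^ p * ENNReal.ofReal (u x))
          + ∫⁻ x in Q, (∑' k : ℕ, (G k).indicator (fun _ => c k) x)
            * ENNReal.ofReal (u x) := by
          rw [← lintegral_add_left' (f := fun x => (2 * l0) ^ p * ENNReal.ofReal (u x))
            (aemeasurable_const.mul huae.restrict)]
          refine lintegral_congr fun x => ?_
          rw [add_mul]
      _ ≤ 2 ^ p * (C * νQ) + 2 ^ p * (C * νQ) * 2 := by
          gcongr ?_ + ?_
          · -- first piece
            rw [lintegral_const_mul' _ _
              (ENNReal.rpow_ne_top_of_nonneg hp.le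
                (ENNReal.mul_ne_top (by norm_num) hl0top))]
            have hm : (∫⁻ y in Q, ENNReal.ofReal (u y))
                ≤ C * (l0⁻¹) ^ (p+1) * volume Q :=
              cube_estimate hp hV0 hVtop (hA Q hQ) (le_of_eq hl0inv.symm)
            calc (2 * l0) ^ p * ∫⁻ x in Q, ENNReal.ofReal (u x)
                ≤ (2 * l0) ^ p * (C * (l0⁻¹) ^ (p+1) * volume Q) :=
                  mul_le_mul_right hm _
              _ = 2 ^ p * (l0 ^ p * (C * (l0⁻¹) ^ (p+1) * volume Q)) := by
                  rw [ENNReal.mul_rpow_of_nonneg _ _ hp.le, mul_assoc]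
              _ = 2 ^ p * (C * νQ) := by
                  rw [level_algebra hp hl00 hl0top, hl0invV]
          · -- second piece
            have hstep : ∀ k : ℕ, (∫⁻ x in Q, (G k).indicator (fun _ => c k) x
                * ENNReal.ofReal (u x))
                ≤ 2 ^ p * (C * νQ) * ((2:ℝ≥0∞) ^ (k+1))⁻¹ := by
              intro k
              have heq : ∀ x, (G k).indicator (fun _ => c k) x * ENNReal.ofReal (u x)
                  = (G k).indicator (fun y => c k * ENNReal.ofReal (u y)) x := by
                intro x
                by_cases h : x ∈ G k <;> simp [h]
              calc (∫⁻ x in Q, (G k).indicator (fun _ => c k) x * ENNReal.ofReal (u x))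
                  = ∫⁻ x in Q, (G k).indicator (fun y => c k * ENNReal.ofReal (u y)) x := by
                    exact lintegral_congr fun x => heq x
                _ ≤ ∫⁻ x, (G k).indicator (fun y => c k * ENNReal.ofReal (u y)) x :=
                    setLIntegral_le_lintegral _ _
                _ = ∫⁻ x in G k, c k * ENNReal.ofReal (u x) :=
                    lintegral_indicator (hGmeas k) _
                _ = c k * ∫⁻ x in G k, ENNReal.ofReal (u x) :=
                    lintegral_const_mul' _ _ (hc_ne_top k)
                _ ≤ c k * ∑' B : (𝓜 k), ∫⁻ x in (B : Set (Fin n → ℝ)),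
                      ENNReal.ofReal (u x) := by
                    refine mul_le_mul_right ?_ _
                    haveI := (hcount k).to_subtype
                    rw [hGdef]
                    simp only []
                    rw [Set.sUnion_eq_iUnion]
                    exact lintegral_iUnion_le _ _
                _ ≤ c k * ∑' B : (𝓜 k),
                      C * ((2 ^ (k+1) * l0)⁻¹) ^ (p+1) * volume (B : Set (Fin n → ℝ)) := by
                    refine mul_le_mul_right (ENNReal.tsum_le_tsum fun B => ?_) _
                    exact hcube k B B.2
                _ = c k * (C * ((2 ^ (k+1) * l0)⁻¹) ^ (p+1)
                      * ∑' B : (𝓜 k), volume (B : Set (Fin n → ℝ))) := by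
                    rw [ENNReal.tsum_mul_left]
                _ ≤ c k * (C * ((2 ^ (k+1) * l0)⁻¹) ^ (p+1) * volume Q) := by
                    exact mul_le_mul_right (mul_le_mul_right (hvolsum k) _) _
                _ = 2 ^ p * ((2 ^ (k+1) * l0) ^ p
                      * (C * ((2 ^ (k+1) * l0)⁻¹) ^ (p+1) * volume Q)) := by
                    show (2 * (2 ^ (k+1) * l0)) ^ p * _ = _
                    rw [ENNReal.mul_rpow_of_nonneg 2 (2 ^ (k+1) * l0) hp.le]
                    ring
                _ = 2 ^ p * (C * ((2 ^ (k+1) * l0)⁻¹ * volume Q)) := by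
                    rw [level_algebra hp (hlk0 k) (hlktop k)]
                _ = 2 ^ p * (C * νQ) * ((2:ℝ≥0∞) ^ (k+1))⁻¹ := by
                    rw [ENNReal.mul_inv (Or.inr hl0top) (Or.inr hl00)]
                    rw [← hl0invV]
                    ring
            calc (∫⁻ x in Q, (∑' k : ℕ, (G k).indicator (fun _ => c k) x)
                  * ENNReal.ofReal (u x))
                = ∫⁻ x in Q, ∑' k : ℕ, (G k).indicator (fun _ => c k) x
                  * ENNReal.ofReal (u x) := by
                  refine lintegral_congr fun x => ?_
                  rw [ENNReal.tsum_mul_right]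
              _ = ∑' k : ℕ, ∫⁻ x in Q, (G k).indicator (fun _ => c k) x
                  * ENNReal.ofReal (u x) := by
                  refine lintegral_tsum fun k => ?_
                  exact ((measurable_const.indicator (hGmeas k)).aemeasurable.mul
                    huae.restrict)
              _ ≤ ∑' k : ℕ, 2 ^ p * (C * νQ) * ((2:ℝ≥0∞) ^ (k+1))⁻¹ :=
                  ENNReal.tsum_le_tsum hstep
              _ = 2 ^ p * (C * νQ) * ∑' k : ℕ, ((2:ℝ≥0∞) ^ (k+1))⁻¹ :=
                  ENNReal.tsum_mul_left
              _ ≤ 2 ^ p * (C * νQ) * 2 := mul_le_mul_right tsum_twopow_le _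
      _ = 3 * (2:ℝ≥0∞) ^ p * C * νQ := by ring
end

section
/- Necessity of the two-weight A_{-p} condition: suppose 0 < p < ∞ and (u, σ) are weights such that the weak-type inequality u({x : M^𝖣_{-1}(fσ^{-1})(x) > λ}) ≤ C λ^{-p} ∫|f|^p σ holds for all f ∈ L^p(σ) and λ > 0. Then ⨍_Q u ≤ C' (⨍_Q σ)^{p+1} for every dyadic cube Q. -/
open MeasureTheory Set ENNReal Filter

/-- Necessity of the two-weight `A_{-p}` condition: the weak-type inequality for
the dyadic harmonic maximal operator implies `⨍_Q u ≤ C' (⨍_Q σ)^{p+1}` for all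
dyadic cubes `Q`. -/
theorem weak_type_implies_dyadic_Ap (n : ℕ) (𝒟 : Set (Set (Fin n → ℝ)))
    (hD : IsDyadicGrid 𝒟) (p : ℝ) (hp : 0 < p)
    (u σ : (Fin n → ℝ) → ℝ) (hu0 : 0 ≤ u) (hσ0 : 0 ≤ σ)
    (hu : LocallyIntegrable u volume) (hσ : LocallyIntegrable σ volume)
    (C : ℝ≥0∞) (hC : C ≠ ⊤)
    (hweak : ∀ f : (Fin n → ℝ) → ℝ, Measurable f →
      (∫⁻ x, ENNReal.ofReal |f x| ^ p * ENNReal.ofReal (σ x)) < ⊤ →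
      ∀ lam : ℝ≥0∞, 0 < lam →
        ∫⁻ x in {x | lam < harmMax 𝒟
            (fun y => ENNReal.ofReal |f y| * (ENNReal.ofReal (σ y))⁻¹) x},
            ENNReal.ofReal (u x)
          ≤ C * lam⁻¹ ^ p * ∫⁻ x, ENNReal.ofReal |f x| ^ p * ENNReal.ofReal (σ x)) :
    ∃ C' : ℝ≥0∞, C' ≠ ⊤ ∧ ∀ Q ∈ 𝒟,
      (volume Q)⁻¹ * ∫⁻ y in Q, ENNReal.ofReal (u y)
        ≤ C' * ((volume Q)⁻¹ * ∫⁻ y in Q, ENNReal.ofReal (σ y)) ^ (p + 1) := by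
  classical
  refine ⟨C * 2 ^ p, ENNReal.mul_ne_top hC
    (ENNReal.rpow_lt_top_of_nonneg hp.le (by norm_num)).ne, ?_⟩
  intro Q hQ
  obtain ⟨k, a, hQeq⟩ := hD.1 Q hQ
  have hQm : MeasurableSet Q := by
    rw [hQeq]; exact MeasurableSet.univ_pi fun i => measurableSet_Ico
  have hvol : volume Q = ENNReal.ofReal ((2:ℝ)^k) ^ n := by
    rw [hQeq, volume_pi_pi]
    simp [Real.volume_Ico]
  have h2k : (0:ℝ) < (2:ℝ)^k := by positivity
  have hv0 : volume Q ≠ 0 := by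
    rw [hvol]; exact (pow_ne_zero _ (ENNReal.ofReal_pos.mpr h2k).ne')
  have hvtop : volume Q ≠ ⊤ := by
    rw [hvol]; exact ENNReal.pow_ne_top ENNReal.ofReal_ne_top
  -- integrability of σ on Q
  have hQsub : Q ⊆ Set.univ.pi fun i => Set.Icc (a i) (a i + (2:ℝ)^k) := by
    rw [hQeq]; exact Set.pi_mono fun i _ => Set.Ico_subset_Icc_self
  have hcomp : IsCompact (Set.univ.pi fun i => Set.Icc (a i) (a i + (2:ℝ)^k)) :=
    isCompact_univ_pi fun i => isCompact_Icc
  have hσint : IntegrableOn σ Q volume :=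
    (hσ.integrableOn_isCompact hcomp).mono_set hQsub
  have hσQtop : (∫⁻ y in Q, ENNReal.ofReal (σ y)) ≠ ⊤ :=
    hσint.lintegral_lt_top.ne
  set σQ := ∫⁻ y in Q, ENNReal.ofReal (σ y) with hσQdef
  set v := volume Q with hvdef
  -- the test function
  set f : (Fin n → ℝ) → ℝ := Q.indicator (fun _ => (1:ℝ)) with hfdef
  have hfm : Measurable f := measurable_const.indicator hQm
  have hInt : (∫⁻ x, ENNReal.ofReal |f x| ^ p * ENNReal.ofReal (σ x)) = σQ := by
    rw [hσQdef, ← lintegral_indicator hQm]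
    refine lintegral_congr fun x => ?_
    by_cases hx : x ∈ Q
    · simp [hfdef, Set.indicator_of_mem hx]
    · simp [hfdef, Set.indicator_of_notMem hx, ENNReal.zero_rpow_of_pos hp]
  have hIntlt : (∫⁻ x, ENNReal.ofReal |f x| ^ p * ENNReal.ofReal (σ x)) < ⊤ := by
    rw [hInt]; exact hσQtop.lt_top
  set g : (Fin n → ℝ) → ℝ≥0∞ :=
    fun y => ENNReal.ofReal |f y| * (ENNReal.ofReal (σ y))⁻¹ with hgdef
  have hgint : (∫⁻ y in Q, (g y)⁻¹) = σQ := by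
    rw [hσQdef]
    refine setLIntegral_congr_fun hQm (fun y hy => ?_)
    simp [hgdef, hfdef, Set.indicator_of_mem hy]
  -- lower bound for harmMax on Q
  have hharm : ∀ x ∈ Q, (v⁻¹ * σQ)⁻¹ ≤ harmMax 𝒟 g x := by
    intro x hx
    rw [← hgint]
    exact le_iSup_of_le Q (le_iSup_of_le hQ (le_iSup_of_le hx le_rfl))
  -- main estimate for a given lam
  have key : ∀ lam : ℝ≥0∞, 0 < lam → lam < (v⁻¹ * σQ)⁻¹ →
      (∫⁻ y in Q, ENNReal.ofReal (u y)) ≤ C * lam⁻¹ ^ p * σQ := by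
    intro lam hlam0 hlamA
    have hsub : Q ⊆ {x | lam < harmMax 𝒟 g x} :=
      fun x hx => lt_of_lt_of_le hlamA (hharm x hx)
    calc (∫⁻ y in Q, ENNReal.ofReal (u y))
        ≤ ∫⁻ x in {x | lam < harmMax 𝒟 g x}, ENNReal.ofReal (u x) :=
          lintegral_mono_set hsub
      _ ≤ C * lam⁻¹ ^ p * ∫⁻ x, ENNReal.ofReal |f x| ^ p * ENNReal.ofReal (σ x) :=
          hweak f hfm hIntlt lam hlam0
      _ = C * lam⁻¹ ^ p * σQ := by rw [hInt]
  by_cases hσQ0 : σQ = 0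
  · have h0 : (∫⁻ y in Q, ENNReal.ofReal (u y)) ≤ 0 := by
      have := key 1 one_pos (by simp [hσQ0])
      simpa [hσQ0] using this
    rw [le_antisymm h0 zero_le, mul_zero]
    exact zero_le
  · -- σQ ≠ 0
    set B := v⁻¹ * σQ with hBdef
    have hB0 : B ≠ 0 := by
      simp only [hBdef, mul_ne_zero_iff, ENNReal.inv_ne_zero]
      exact ⟨hvtop, hσQ0⟩
    have hBtop : B ≠ ⊤ := by
      exact ENNReal.mul_ne_top (ENNReal.inv_ne_top.mpr hv0) hσQtop
    have hA0 : B⁻¹ ≠ 0 := ENNReal.inv_ne_zero.mpr hBtop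
    have hAtop : B⁻¹ ≠ ⊤ := ENNReal.inv_ne_top.mpr hB0
    have hlam0 : (0:ℝ≥0∞) < B⁻¹ / 2 := ENNReal.div_pos hA0 (by norm_num)
    have hlamA : B⁻¹ / 2 < B⁻¹ := ENNReal.half_lt_self hA0 hAtop
    have hkey := key _ hlam0 hlamA
    have hinv : (B⁻¹ / 2)⁻¹ = 2 * B := by
      rw [ENNReal.inv_div (Or.inl (by norm_num)) (Or.inl (by norm_num))]
      rw [div_eq_mul_inv, inv_inv]
    rw [hinv, ENNReal.mul_rpow_of_nonneg _ _ hp.le] at hkey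
    have hfinal : v⁻¹ * (∫⁻ y in Q, ENNReal.ofReal (u y))
        ≤ C * 2 ^ p * B ^ (p + 1) := by
      have hrw : B ^ (p + 1) = B ^ p * B := by
        rw [ENNReal.rpow_add p 1 hB0 hBtop, ENNReal.rpow_one]
      rw [hrw, hBdef]
      calc v⁻¹ * (∫⁻ y in Q, ENNReal.ofReal (u y))
          ≤ v⁻¹ * (C * (2 ^ p * B ^ p) * σQ) := mul_le_mul_right hkey _
        _ = C * 2 ^ p * (B ^ p * (v⁻¹ * σQ)) := by ring
    exact hfinal
end

section
/- Dyadic A_{-p} implies weak type: let 0 < p < ∞ and (u, σ) be weights with ⨍_Q u ≤ C(⨍_Q σ)^{p+1} for all dyadic cubes Q. Then u({x ∈ ℝ^n : M^𝖣_{-1}(fσ^{-1})(x) > λ}) ≤ C' λ^{-p} ∫_{ℝ^n}|f|^p σ for all f ∈ L^p(σ) and λ > 0. -/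
open MeasureTheory Set ENNReal Filter

noncomputable section



/-- auxiliary: a dyadic-type cube. -/
def dyCube (n : ℕ) (k : ℤ) (a : Fin n → ℝ) : Set (Fin n → ℝ) :=
  Set.univ.pi fun i => Set.Ico (a i) (a i + (2 : ℝ) ^ k)

lemma dyCube_measurable {n : ℕ} {k : ℤ} {a : Fin n → ℝ} :
    MeasurableSet (dyCube n k a) :=
  MeasurableSet.univ_pi fun _ => measurableSet_Ico

lemma dyCube_volume {n : ℕ} {k : ℤ} {a : Fin n → ℝ} :
    volume (dyCube n k a) = ∏ _i : Fin n, ENNReal.ofReal ((2:ℝ)^k) := by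
  rw [dyCube, volume_pi_pi]
  simp [Real.volume_Ico]

lemma dyCube_volume_ne_zero {n : ℕ} {k : ℤ} {a : Fin n → ℝ} :
    volume (dyCube n k a) ≠ 0 := by
  rw [dyCube_volume]
  refine (CanonicallyOrderedAdd.prod_pos.2 fun i _ => ?_).ne'
  exact ENNReal.ofReal_pos.2 (by positivity)

lemma dyCube_volume_ne_top {n : ℕ} {k : ℤ} {a : Fin n → ℝ} :
    volume (dyCube n k a) ≠ ⊤ := by
  rw [dyCube_volume]
  exact (ENNReal.prod_lt_top fun i _ => ENNReal.ofReal_lt_top).ne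

lemma dyCube_subset_eq {n : ℕ} {k l : ℤ} {a b : Fin n → ℝ}
    (hkl : (2:ℝ)^l ≤ (2:ℝ)^k) (hsub : dyCube n k a ⊆ dyCube n l b) :
    dyCube n k a = dyCube n l b := by
  have hk : (0:ℝ) < 2^k := by positivity
  have hl : (0:ℝ) < 2^l := by positivity
  have key : ∀ i, a i = b i ∧ a i + (2:ℝ)^k = b i + (2:ℝ)^l := by
    intro i
    have hIco : Set.Ico (a i) (a i + (2:ℝ)^k) ⊆ Set.Ico (b i) (b i + (2:ℝ)^l) := by
      intro t ht
      have hmem : Function.update a i t ∈ dyCube n k a := by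
        intro j _
        rcases eq_or_ne j i with rfl | hj
        · simpa using ht
        · simp only [Function.update_of_ne hj]
          exact ⟨le_refl _, by linarith⟩
      have h2 := hsub hmem i (Set.mem_univ i)
      simpa using h2
    have h3 := (Set.Ico_subset_Ico_iff (by linarith)).1 hIco
    constructor <;> [skip; skip] <;>
      · have h1 := h3.1; have h2 := h3.2; linarith
  ext x
  simp only [dyCube, Set.mem_pi, Set.mem_univ, forall_true_left]
  exact forall_congr' fun i => by rw [(key i).1, ← (key i).2, (key i).1]

lemma IsDyadicGrid.rep {n : ℕ} {𝒟 : Set (Set (Fin n → ℝ))} (hD : IsDyadicGrid 𝒟)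
    {Q : Set (Fin n → ℝ)} (hQ : Q ∈ 𝒟) : ∃ (k : ℤ) (a : Fin n → ℝ), Q = dyCube n k a :=
  hD.1 Q hQ

lemma IsDyadicGrid.countable {n : ℕ} {𝒟 : Set (Set (Fin n → ℝ))}
    (hD : IsDyadicGrid 𝒟) : 𝒟.Countable := by
  have hsub : 𝒟 ⊆ ⋃ k : ℤ, {Q | Q ∈ 𝒟 ∧ ∃ a, Q = dyCube n k a} := by
    intro Q hQ
    obtain ⟨k, a, rfl⟩ := hD.rep hQ
    exact mem_iUnion.2 ⟨k, hQ, a, rfl⟩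
  refine Set.Countable.mono hsub (countable_iUnion fun k => ?_)
  set s := {Q | Q ∈ 𝒟 ∧ ∃ a, Q = dyCube n k a} with hs
  have hdisj : Pairwise (Function.onFun Disjoint (fun Q : s => (Q : Set (Fin n → ℝ)))) := by
    rintro ⟨Q, hQ⟩ ⟨P, hP⟩ hne
    have hne' : Q ≠ P := fun h => hne (Subtype.ext h)
    obtain ⟨aQ, haQ⟩ := hQ.2
    obtain ⟨aP, haP⟩ := hP.2
    rcases hD.2.1 Q hQ.1 P hP.1 with h | h | h
    · exact Set.disjoint_iff_inter_eq_empty.2 h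
    · exact absurd (haQ ▸ haP ▸ dyCube_subset_eq le_rfl
        (haQ ▸ haP ▸ Set.inter_eq_left.1 h)) hne'
    · exact absurd (haQ ▸ haP ▸ (dyCube_subset_eq le_rfl
        (haQ ▸ haP ▸ Set.inter_eq_right.1 h)).symm) hne'
  have hmble : ∀ Q : s, MeasurableSet (Q : Set (Fin n → ℝ)) := by
    rintro ⟨Q, hQ⟩
    obtain ⟨a, ha⟩ := hQ.2
    exact ha ▸ dyCube_measurable
  have hcnt := MeasureTheory.Measure.countable_meas_pos_of_disjoint_iUnion
    (μ := volume) hmble hdisj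
  have huniv : {i : s | 0 < volume (i : Set (Fin n → ℝ))} = Set.univ := by
    ext ⟨Q, hQ⟩
    obtain ⟨a, ha⟩ := hQ.2
    simp only [mem_setOf_eq, mem_univ, iff_true]
    exact ha ▸ (pos_iff_ne_zero.2 dyCube_volume_ne_zero)
  rw [huniv] at hcnt
  haveI : Countable s := Set.countable_univ_iff.1 hcnt
  exact Set.countable_coe_iff.1 this

lemma exists_maximal_disjoint {n : ℕ} {𝒟 : Set (Set (Fin n → ℝ))}
    (hD : IsDyadicGrid 𝒟) (𝒢 : Set (Set (Fin n → ℝ))) (h𝒢 : 𝒢 ⊆ 𝒟) (N : ℤ)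
    (hbdd : ∀ Q ∈ 𝒢, ∃ k ≤ N, ∃ a, Q = dyCube n k a) :
    ∃ ℳ ⊆ 𝒢, ℳ.Pairwise Disjoint ∧ ⋃₀ 𝒢 ⊆ ⋃₀ ℳ := by
  refine ⟨{Q | Q ∈ 𝒢 ∧ ∀ P ∈ 𝒢, Q ⊆ P → Q = P}, fun Q hQ => hQ.1, ?_, ?_⟩
  · rintro Q ⟨hQ𝒢, hQmax⟩ P ⟨hP𝒢, hPmax⟩ hne
    rcases hD.2.1 Q (h𝒢 hQ𝒢) P (h𝒢 hP𝒢) with h | h | h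
    · exact Set.disjoint_iff_inter_eq_empty.2 h
    · exact absurd (hQmax P hP𝒢 (Set.inter_eq_left.1 h)) hne
    · exact absurd ((hPmax Q hQ𝒢 (Set.inter_eq_right.1 h)).symm) hne
  · rintro x ⟨Q0, hQ0, hxQ0⟩
    obtain ⟨k0, hk0N, a0, h0⟩ := hbdd Q0 hQ0
    obtain ⟨K, hK, hmax⟩ := Int.exists_greatest_of_bdd
      (P := fun k => k ≤ N ∧ ∃ Q ∈ 𝒢, x ∈ Q ∧ ∃ a, Q = dyCube n k a)
      ⟨N, fun z hz => hz.1⟩ ⟨k0, hk0N, Q0, hQ0, hxQ0, a0, h0⟩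
    obtain ⟨hKN, Q, hQ𝒢, hxQ, a, rfl⟩ := hK
    refine ⟨dyCube n K a, ⟨hQ𝒢, ?_⟩, hxQ⟩
    intro P hP𝒢 hsubP
    obtain ⟨l, hlN, b, rfl⟩ := hbdd P hP𝒢
    have hlK : l ≤ K := hmax l ⟨hlN, _, hP𝒢, hsubP hxQ, b, rfl⟩
    exact dyCube_subset_eq (zpow_le_zpow_right₀ one_le_two hlK) hsubP

lemma pointwise_holder {p : ℝ} (hp : 0 < p) (a s : ℝ≥0∞) (ha : a ≠ ⊤) (hs : s ≠ ⊤)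
    (hfin : (a * s⁻¹)⁻¹ ≠ ⊤) :
    s ≤ ((a ^ p * s) ^ (1/(p+1))) * (((a * s⁻¹)⁻¹) ^ (p/(p+1))) := by
  have hp1 : (0:ℝ) < p + 1 := by linarith
  have ha0 : a ≠ 0 := by
    intro h
    exact hfin (by simp [h])
  rcases eq_or_ne s 0 with rfl | hs0
  · exact zero_le
  have h1 : (a * s⁻¹)⁻¹ = a⁻¹ * s := by
    rw [ENNReal.mul_inv (Or.inl ha0) (Or.inl ha), inv_inv]
  rw [h1]
  have hα : (0:ℝ) ≤ 1/(p+1) := by positivity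
  have hβ : (0:ℝ) ≤ p/(p+1) := by positivity
  have hab : a ^ (p/(p+1)) ≠ 0 := (ENNReal.rpow_pos (pos_iff_ne_zero.2 ha0) ha).ne'
  have habt : a ^ (p/(p+1)) ≠ ⊤ := ENNReal.rpow_ne_top_of_nonneg hβ ha
  have key : (a ^ p * s) ^ (1/(p+1)) * ((a⁻¹ * s) ^ (p/(p+1))) = s := by
    rw [ENNReal.mul_rpow_of_nonneg _ _ hα, ENNReal.mul_rpow_of_nonneg _ _ hβ,
      ENNReal.inv_rpow, ← ENNReal.rpow_mul a p (1/(p+1)),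
      (show p * (1/(p+1)) = p/(p+1) by ring)]
    calc a ^ (p/(p+1)) * s ^ (1/(p+1)) * ((a ^ (p/(p+1)))⁻¹ * s ^ (p/(p+1)))
        = (a ^ (p/(p+1)) * (a ^ (p/(p+1)))⁻¹) * (s ^ (1/(p+1)) * s ^ (p/(p+1))) := by
          ring
      _ = s := by
          rw [ENNReal.mul_inv_cancel hab habt, ← ENNReal.rpow_add _ _ hs0 hs,
            (show 1/(p+1) + p/(p+1) = 1 by field_simp; ring), ENNReal.rpow_one, one_mul]
  exact key.ge

lemma cube_estimate_s16 {n : ℕ} {p : ℝ} (hp : 0 < p) {u σ f : (Fin n → ℝ) → ℝ}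
    (hσm : AEMeasurable σ (volume : Measure (Fin n → ℝ))) (hfm : Measurable f)
    {C lam : ℝ≥0∞} {Q : Set (Fin n → ℝ)} (hQm : MeasurableSet Q)
    (hV0 : volume Q ≠ 0) (hVtop : volume Q ≠ ⊤)
    (hAQ : (volume Q)⁻¹ * ∫⁻ y in Q, ENNReal.ofReal (u y)
      ≤ C * ((volume Q)⁻¹ * ∫⁻ y in Q, ENNReal.ofReal (σ y)) ^ (p+1))
    (hlam : 0 < lam)
    (hQ : lam < ((volume Q)⁻¹
      * ∫⁻ y in Q, (ENNReal.ofReal |f y| * (ENNReal.ofReal (σ y))⁻¹)⁻¹)⁻¹) :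
    ∫⁻ y in Q, ENNReal.ofReal (u y)
      ≤ C * lam⁻¹ ^ p * ∫⁻ y in Q, ENNReal.ofReal |f y| ^ p * ENNReal.ofReal (σ y) := by
  have hp1 : (0:ℝ) < p + 1 := by linarith
  set V := volume Q with hV
  set h : (Fin n → ℝ) → ℝ≥0∞ :=
    fun y => (ENNReal.ofReal |f y| * (ENNReal.ofReal (σ y))⁻¹)⁻¹ with hh
  set Y := ∫⁻ y in Q, h y with hY
  set X := ∫⁻ y in Q, ENNReal.ofReal |f y| ^ p * ENNReal.ofReal (σ y) with hX
  set S := ∫⁻ y in Q, ENNReal.ofReal (σ y) with hS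
  have h1 : V⁻¹ * Y ≤ lam⁻¹ := (ENNReal.lt_inv_iff_lt_inv.1 hQ).le
  have hltop : lam⁻¹ ≠ ⊤ := ENNReal.inv_ne_top.2 hlam.ne'
  have hYtop : Y ≠ ⊤ := by
    have : Y = V * (V⁻¹ * Y) := by
      rw [← mul_assoc, ENNReal.mul_inv_cancel hV0 hVtop, one_mul]
    rw [this]
    exact ENNReal.mul_ne_top hVtop (lt_of_le_of_lt h1 hltop.lt_top).ne
  -- measurability
  have hfE : Measurable fun y => ENNReal.ofReal |f y| := hfm.abs.ennreal_ofReal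
  have hσE : AEMeasurable (fun y => ENNReal.ofReal (σ y)) (volume.restrict Q) :=
    (hσm.restrict (s := Q)).ennreal_ofReal
  have hhm : AEMeasurable h (volume.restrict Q) :=
    ((hfE.aemeasurable.mul hσE.inv).inv)
  have hae : ∀ᵐ y ∂(volume.restrict Q), h y < ⊤ := ae_lt_top' hhm hYtop
  -- Hölder
  set φ : (Fin n → ℝ) → ℝ≥0∞ :=
    fun y => (ENNReal.ofReal |f y| ^ p * ENNReal.ofReal (σ y)) ^ (1/(p+1)) with hφ
  set ψ : (Fin n → ℝ) → ℝ≥0∞ := fun y => h y ^ (p/(p+1)) with hψ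
  have hφm : AEMeasurable φ (volume.restrict Q) :=
    ((hfE.aemeasurable.pow aemeasurable_const).mul hσE).pow aemeasurable_const
  have hψm : AEMeasurable ψ (volume.restrict Q) := hhm.pow aemeasurable_const
  have hconj : (p+1).HolderConjugate ((p+1)/p) := by
    rw [Real.holderConjugate_iff]
    constructor
    · linarith
    · rw [inv_div]
      field_simp
      ring
  have hHold := ENNReal.lintegral_mul_le_Lp_mul_Lq (volume.restrict Q) hconj hφm hψm
  have hφcollapse : ∫⁻ y in Q, φ y ^ (p+1) = X := by
    refine lintegral_congr fun y => ?_
    rw [hφ, ← ENNReal.rpow_mul, (show 1/(p+1) * (p+1) = 1 by field_simp), ENNReal.rpow_one]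
  have hψcollapse : ∫⁻ y in Q, ψ y ^ ((p+1)/p) = Y := by
    refine lintegral_congr fun y => ?_
    rw [hψ, ← ENNReal.rpow_mul, (show p/(p+1) * ((p+1)/p) = 1 by field_simp), ENNReal.rpow_one]
  rw [hφcollapse, hψcollapse] at hHold
  have hSle : S ≤ ∫⁻ y in Q, (φ * ψ) y := by
    refine lintegral_mono_ae ?_
    filter_upwards [hae] with y hy
    exact pointwise_holder hp _ _ ENNReal.ofReal_ne_top ENNReal.ofReal_ne_top hy.ne
  have key1 : S ≤ X ^ (1/(p+1)) * Y ^ (p/(p+1)) := by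
    refine hSle.trans (hHold.trans ?_)
    rw [one_div_div]
  have key2 : S ^ (p+1) ≤ X * Y ^ p := by
    calc S ^ (p+1) ≤ (X ^ (1/(p+1)) * Y ^ (p/(p+1))) ^ (p+1) :=
          ENNReal.rpow_le_rpow key1 (by linarith)
      _ = X * Y ^ p := by
          rw [ENNReal.mul_rpow_of_nonneg _ _ (by linarith), ← ENNReal.rpow_mul,
            ← ENNReal.rpow_mul, (show 1/(p+1) * (p+1) = 1 by field_simp),
            (show p/(p+1) * (p+1) = p by field_simp), ENNReal.rpow_one]
  have hVi0 : V⁻¹ ≠ 0 := ENNReal.inv_ne_zero.2 hVtop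
  have hVit : V⁻¹ ≠ ⊤ := ENNReal.inv_ne_top.2 hV0
  calc ∫⁻ y in Q, ENNReal.ofReal (u y)
      = V * (V⁻¹ * ∫⁻ y in Q, ENNReal.ofReal (u y)) := by
        rw [← mul_assoc, ENNReal.mul_inv_cancel hV0 hVtop, one_mul]
    _ ≤ V * (C * (V⁻¹ * S) ^ (p+1)) := mul_le_mul_right hAQ V
    _ = V * (C * (V⁻¹ ^ (p+1) * S ^ (p+1))) := by
        rw [ENNReal.mul_rpow_of_nonneg _ _ (by linarith)]
    _ ≤ V * (C * (V⁻¹ ^ (p+1) * (X * Y ^ p))) := by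
        gcongr
    _ = C * (V⁻¹ * Y) ^ p * X := by
        rw [ENNReal.rpow_add p 1 hVi0 hVit, ENNReal.rpow_one,
          ENNReal.mul_rpow_of_nonneg _ _ hp.le]
        calc V * (C * (V⁻¹ ^ p * V⁻¹ * (X * Y ^ p)))
            = (V * V⁻¹) * (C * (V⁻¹ ^ p * Y ^ p) * X) := by ring
          _ = C * (V⁻¹ ^ p * Y ^ p) * X := by
              rw [ENNReal.mul_inv_cancel hV0 hVtop, one_mul]
    _ ≤ C * lam⁻¹ ^ p * X := by
        gcongr
        all_goals try exact ENNReal.rpow_le_rpow h1 hp.le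

/-- The dyadic two-weight `A_{-p}` condition implies the weak-type inequality
for the dyadic harmonic maximal operator. -/
theorem dyadic_Ap_implies_weak_type (n : ℕ) (𝒟 : Set (Set (Fin n → ℝ)))
    (hD : IsDyadicGrid 𝒟) (p : ℝ) (hp : 0 < p)
    (u σ : (Fin n → ℝ) → ℝ) (hu0 : 0 ≤ u) (hσ0 : 0 ≤ σ)
    (hu : LocallyIntegrable u volume) (hσ : LocallyIntegrable σ volume)
    (C : ℝ≥0∞) (hC : C ≠ ⊤)
    (hA : ∀ Q ∈ 𝒟, (volume Q)⁻¹ * ∫⁻ y in Q, ENNReal.ofReal (u y)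
        ≤ C * ((volume Q)⁻¹ * ∫⁻ y in Q, ENNReal.ofReal (σ y)) ^ (p + 1)) :
    ∃ C' : ℝ≥0∞, C' ≠ ⊤ ∧ ∀ f : (Fin n → ℝ) → ℝ, Measurable f →
      (∫⁻ x, ENNReal.ofReal |f x| ^ p * ENNReal.ofReal (σ x)) < ⊤ →
      ∀ lam : ℝ≥0∞, 0 < lam →
        ∫⁻ x in {x | lam < harmMax 𝒟
            (fun y => ENNReal.ofReal |f y| * (ENNReal.ofReal (σ y))⁻¹) x},
            ENNReal.ofReal (u x)
          ≤ C' * lam⁻¹ ^ p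
              * ∫⁻ x, ENNReal.ofReal |f x| ^ p * ENNReal.ofReal (σ x) := by
  classical
  refine ⟨C, hC, ?_⟩
  intro f hf _hfin lam hlam
  set g : (Fin n → ℝ) → ℝ≥0∞ :=
    fun y => ENNReal.ofReal |f y| * (ENNReal.ofReal (σ y))⁻¹ with hg
  set E : Set (Fin n → ℝ) := {x | lam < harmMax 𝒟 g x} with hEdef
  set 𝒢 : Set (Set (Fin n → ℝ)) :=
    {Q | Q ∈ 𝒟 ∧ lam < ((volume Q)⁻¹ * ∫⁻ y in Q, (g y)⁻¹)⁻¹} with h𝒢def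
  have h𝒢𝒟 : 𝒢 ⊆ 𝒟 := fun Q hQ => hQ.1
  have hE : E = ⋃₀ 𝒢 := by
    ext x
    simp only [hEdef, mem_setOf_eq, harmMax, lt_iSup_iff, mem_sUnion, h𝒢def]
    constructor
    · rintro ⟨B, hB, hxB, hlt⟩
      exact ⟨B, ⟨hB, hlt⟩, hxB⟩
    · rintro ⟨B, ⟨hB, hlt⟩, hxB⟩
      exact ⟨B, hB, hxB, hlt⟩
  have hQmeas : ∀ Q ∈ 𝒟, MeasurableSet Q := fun Q hQ => by
    obtain ⟨k, a, rfl⟩ := hD.rep hQ; exact dyCube_measurable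
  have hcnt := hD.countable
  have hEmeas : MeasurableSet E := by
    rw [hE]
    exact MeasurableSet.sUnion (hcnt.mono h𝒢𝒟) (fun Q hQ => hQmeas Q (h𝒢𝒟 hQ))
  set uE : (Fin n → ℝ) → ℝ≥0∞ := fun x => ENNReal.ofReal (u x) with huE
  set FσE : (Fin n → ℝ) → ℝ≥0∞ :=
    fun x => ENNReal.ofReal |f x| ^ p * ENNReal.ofReal (σ x) with hFσE
  set μ := volume.withDensity uE with hμ
  set ν := volume.withDensity FσE with hν
  have hgoalL : ∫⁻ x in E, uE x = μ E := (withDensity_apply _ hEmeas).symm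
  have hgoalR : ∫⁻ x, FσE x = ν univ := by
    rw [hν, withDensity_apply _ MeasurableSet.univ, Measure.restrict_univ]
  rw [hgoalL, hgoalR]
  -- cube estimate for members of 𝒢
  have hcube : ∀ Q ∈ 𝒢, μ Q ≤ C * lam⁻¹ ^ p * ν Q := by
    rintro Q ⟨hQ𝒟, hQlt⟩
    have hQm := hQmeas Q hQ𝒟
    obtain ⟨k, a, rfl⟩ := hD.rep hQ𝒟
    rw [hμ, hν, withDensity_apply _ hQm, withDensity_apply _ hQm]
    exact cube_estimate_s16 hp hσ.aestronglyMeasurable.aemeasurable hf hQm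
      dyCube_volume_ne_zero dyCube_volume_ne_top (hA _ hQ𝒟) hlam hQlt
  -- exhaust E by bounded-scale pieces
  set EN : ℕ → Set (Fin n → ℝ) :=
    fun N => ⋃₀ {Q | Q ∈ 𝒢 ∧ ∃ k ≤ (N:ℤ), ∃ a, Q = dyCube n k a} with hEN
  have hmono : Monotone EN := by
    intro N M hNM
    refine sUnion_subset_sUnion fun Q hQ => ?_
    obtain ⟨hQ𝒢, k, hk, a, ha⟩ := hQ
    exact ⟨hQ𝒢, k, le_trans hk (by exact_mod_cast hNM), a, ha⟩
  have hEunion : E = ⋃ N, EN N := by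
    rw [hE]
    ext x
    simp only [mem_sUnion, mem_iUnion, hEN]
    constructor
    · rintro ⟨Q, hQ, hx⟩
      obtain ⟨k, a, ha⟩ := hD.rep (h𝒢𝒟 hQ)
      exact ⟨k.toNat, Q, ⟨hQ, k, Int.self_le_toNat k, a, ha⟩, hx⟩
    · rintro ⟨N, Q, hQ, hx⟩
      exact ⟨Q, hQ.1, hx⟩
  have hsup : μ E = ⨆ N, μ (EN N) := by
    rw [hEunion]; exact hmono.measure_iUnion
  rw [hsup]
  refine iSup_le fun N => ?_
  obtain ⟨ℳ, hℳ, hdisj, hcover⟩ := exists_maximal_disjoint hD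
    {Q | Q ∈ 𝒢 ∧ ∃ k ≤ (N:ℤ), ∃ a, Q = dyCube n k a}
    (fun Q hQ => h𝒢𝒟 hQ.1) (N:ℤ) (fun Q hQ => hQ.2)
  have hℳ𝒢 : ℳ ⊆ 𝒢 := fun Q hQ => (hℳ hQ).1
  have hℳcnt : ℳ.Countable := hcnt.mono (fun Q hQ => h𝒢𝒟 (hℳ𝒢 hQ))
  have hℳmeas : ∀ Q ∈ ℳ, MeasurableSet Q := fun Q hQ => hQmeas Q (h𝒢𝒟 (hℳ𝒢 hQ))
  calc μ (EN N) ≤ μ (⋃₀ ℳ) := measure_mono hcover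
    _ ≤ ∑' Q : ℳ, μ (Q : Set (Fin n → ℝ)) := by
        rw [sUnion_eq_biUnion]
        exact measure_biUnion_le μ hℳcnt _
    _ ≤ ∑' Q : ℳ, C * lam⁻¹ ^ p * ν (Q : Set (Fin n → ℝ)) :=
        ENNReal.tsum_le_tsum fun Q => hcube Q (hℳ𝒢 Q.2)
    _ = C * lam⁻¹ ^ p * ∑' Q : ℳ, ν (Q : Set (Fin n → ℝ)) := ENNReal.tsum_mul_left
    _ = C * lam⁻¹ ^ p * ν (⋃₀ ℳ) := by
        rw [measure_sUnion hℳcnt hdisj hℳmeas]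
    _ ≤ C * lam⁻¹ ^ p * ν univ :=
        mul_le_mul_right (measure_mono (subset_univ _)) _

end
end
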